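/- Reachability is preserved under the auxiliary graph construction: for an m × m grid graph G and boundary vertices x, y of aux(G), there is a directed path from x to y in aux(G) if and only if there is a directed path from x to y in G. -/

import Mathlib

set_option maxHeartbeats 1000000

namespace Stmt9Helper

abbrev BRel (t : ℕ) (E : ℕ × ℕ → ℕ × ℕ → Prop) (a b : ℕ) (w z : ℕ × ℕ) : Prop :=
  E w z ∧ a * t ≤ w.1 ∧ w.1 ≤ (a + 1) * t ∧ b * t ≤ w.2 ∧ w.2 ≤ (b + 1) * t ∧
    a * t ≤ z.1 ∧ z.1 ≤ (a + 1) * t ∧ b * t ≤ z.2 ∧ z.2 ≤ (b + 1) * t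

abbrev ARel (m t : ℕ) (E : ℕ × ℕ → ℕ × ℕ → Prop) (u v : ℕ × ℕ) : Prop :=
  (t ∣ u.1 ∨ t ∣ u.2) ∧ (t ∣ v.1 ∨ t ∣ v.2) ∧
    ∃ a b : ℕ, (a + 1) * t ≤ m ∧ (b + 1) * t ≤ m ∧
      Relation.ReflTransGen (BRel t E a b) u v

abbrev Reach (m t : ℕ) (E : ℕ × ℕ → ℕ × ℕ → Prop) (x u : ℕ × ℕ) : Prop :=
  ∃ w a b, (t ∣ w.1 ∨ t ∣ w.2) ∧ Relation.ReflTransGen (ARel m t E) x w ∧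
    (a + 1) * t ≤ m ∧ (b + 1) * t ≤ m ∧
    a * t ≤ u.1 ∧ u.1 ≤ (a + 1) * t ∧ b * t ≤ u.2 ∧ u.2 ≤ (b + 1) * t ∧
    Relation.ReflTransGen (BRel t E a b) w u

lemma find_block {t m x : ℕ} (ht : 0 < t) (hdvd : t ∣ m) (hm : 0 < m) (hx : x ≤ m) :
    ∃ a, a * t ≤ x ∧ x ≤ (a + 1) * t ∧ (a + 1) * t ≤ m := by
  obtain ⟨k, hk⟩ := hdvd
  rw [Nat.mul_comm] at hk
  have hk1 : 1 ≤ k := by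
    rcases Nat.eq_zero_or_pos k with h | h
    · exfalso; subst h; simp at hk; omega
    · exact h
  rcases eq_or_lt_of_le hx with h | hlt
  · obtain ⟨c, rfl⟩ : ∃ c, k = c + 1 := ⟨k - 1, by omega⟩
    refine ⟨c, ?_, by rw [h, hk], by rw [hk]⟩
    rw [h, hk]
    exact Nat.mul_le_mul_right t (by omega)
  · have hdm := Nat.div_add_mod x t
    have hmod : x % t < t := Nat.mod_lt x ht
    have hq : (x / t + 1) * t = t * (x / t) + t := by ring
    refine ⟨x / t, Nat.div_mul_le_self x t, by linarith, ?_⟩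
    have h1 : (x / t) * t ≤ x := Nat.div_mul_le_self x t
    have h2 : x / t < k := by
      by_contra hcon
      push_neg at hcon
      have : k * t ≤ (x / t) * t := Nat.mul_le_mul_right t hcon
      omega
    rw [hk]
    exact Nat.mul_le_mul_right t (by omega)

lemma reach_step {m t : ℕ} {E : ℕ × ℕ → ℕ × ℕ → Prop} (ht : 0 < t) (hdvd : t ∣ m)
    (hE : ∀ u v : ℕ × ℕ, E u v → u.1 ≤ m ∧ u.2 ≤ m ∧ v.1 ≤ m ∧ v.2 ≤ m ∧
      ((u.1 = v.1 ∧ (u.2 + 1 = v.2 ∨ v.2 + 1 = u.2)) ∨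
        (u.2 = v.2 ∧ (u.1 + 1 = v.1 ∨ v.1 + 1 = u.1))))
    {x u v : ℕ × ℕ} (e : E u v) (hr : Reach m t E x u) : Reach m t E x v := by
  obtain ⟨w, a, b, hw, hxw, ha, hb, h1, h2, h3, h4, hp⟩ := hr
  obtain ⟨hu1, hu2, hv1, hv2, hadj⟩ := hE u v e
  obtain ⟨k, hk⟩ := hdvd
  rw [Nat.mul_comm] at hk
  have ea1 : (a + 1) * t = a * t + t := by ring
  have eb1 : (b + 1) * t = b * t + t := by ring
  rcases hadj with ⟨he, hud | hud⟩ | ⟨he, hud | hud⟩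
  · -- u.1 = v.1, u.2 + 1 = v.2 : moving up
    by_cases hstay : v.2 ≤ (b + 1) * t
    · exact ⟨w, a, b, hw, hxw, ha, hb, by linarith, by linarith, by linarith, hstay,
        hp.tail ⟨e, h1, h2, h3, h4, by linarith, by linarith, by linarith, hstay⟩⟩
    · push_neg at hstay
      have hstay' : (b + 1) * t + 1 ≤ v.2 := hstay
      have hu2e : u.2 = (b + 1) * t := le_antisymm h4 (by linarith)
      have hub : t ∣ u.2 := hu2e ▸ Dvd.intro_left (b + 1) rfl
      have hbk : b + 1 < k := by
        by_contra hcon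
        push_neg at hcon
        have : k * t ≤ (b + 1) * t := Nat.mul_le_mul_right t hcon
        linarith
      have hbm : (b + 1 + 1) * t ≤ m := by
        rw [hk]; exact Nat.mul_le_mul_right t (by omega)
      have eb2 : (b + 1 + 1) * t = (b + 1) * t + t := by ring
      refine ⟨u, a, b + 1, Or.inr hub, hxw.tail ⟨hw, Or.inr hub, a, b, ha, hb, hp⟩,
        ha, hbm, by linarith, by linarith, by linarith, by linarith,
        Relation.ReflTransGen.single ⟨e, h1, h2, by linarith, by linarith,
          by linarith, by linarith, by linarith, by linarith⟩⟩
  · -- u.1 = v.1, v.2 + 1 = u.2 : moving down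
    by_cases hstay : b * t ≤ v.2
    · exact ⟨w, a, b, hw, hxw, ha, hb, by linarith, by linarith, hstay, by linarith,
        hp.tail ⟨e, h1, h2, h3, h4, by linarith, by linarith, hstay, by linarith⟩⟩
    · push_neg at hstay
      have hstay' : v.2 + 1 ≤ b * t := hstay
      have hu2e : u.2 = b * t := le_antisymm (by linarith) h3
      have hub : t ∣ u.2 := hu2e ▸ Dvd.intro_left b rfl
      have hb1 : 1 ≤ b := by
        rcases Nat.eq_zero_or_pos b with h | h
        · exfalso; subst h; simp at hstay'
        · exact h
      obtain ⟨c, rfl⟩ : ∃ c, b = c + 1 := ⟨b - 1, by omega⟩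
      have ec1 : (c + 1) * t = c * t + t := by ring
      have hcm : (c + 1) * t ≤ m := by linarith
      refine ⟨u, a, c, Or.inr hub, hxw.tail ⟨hw, Or.inr hub, a, c + 1, ha, hb, hp⟩,
        ha, hcm, by linarith, by linarith, by linarith, by linarith,
        Relation.ReflTransGen.single ⟨e, h1, h2, by linarith, by linarith,
          by linarith, by linarith, by linarith, by linarith⟩⟩
  · -- u.2 = v.2, u.1 + 1 = v.1 : moving right
    by_cases hstay : v.1 ≤ (a + 1) * t
    · exact ⟨w, a, b, hw, hxw, ha, hb, by linarith, hstay, by linarith, by linarith,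
        hp.tail ⟨e, h1, h2, h3, h4, by linarith, hstay, by linarith, by linarith⟩⟩
    · push_neg at hstay
      have hstay' : (a + 1) * t + 1 ≤ v.1 := hstay
      have hu1e : u.1 = (a + 1) * t := le_antisymm h2 (by linarith)
      have hua : t ∣ u.1 := hu1e ▸ Dvd.intro_left (a + 1) rfl
      have hak : a + 1 < k := by
        by_contra hcon
        push_neg at hcon
        have : k * t ≤ (a + 1) * t := Nat.mul_le_mul_right t hcon
        linarith
      have ham : (a + 1 + 1) * t ≤ m := by
        rw [hk]; exact Nat.mul_le_mul_right t (by omega)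
      have ea2 : (a + 1 + 1) * t = (a + 1) * t + t := by ring
      refine ⟨u, a + 1, b, Or.inl hua, hxw.tail ⟨hw, Or.inl hua, a, b, ha, hb, hp⟩,
        ham, hb, by linarith, by linarith, by linarith, by linarith,
        Relation.ReflTransGen.single ⟨e, by linarith, by linarith, h3, h4,
          by linarith, by linarith, by linarith, by linarith⟩⟩
  · -- u.2 = v.2, v.1 + 1 = u.1 : moving left
    by_cases hstay : a * t ≤ v.1
    · exact ⟨w, a, b, hw, hxw, ha, hb, hstay, by linarith, by linarith, by linarith,
        hp.tail ⟨e, h1, h2, h3, h4, hstay, by linarith, by linarith, by linarith⟩⟩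
    · push_neg at hstay
      have hstay' : v.1 + 1 ≤ a * t := hstay
      have hu1e : u.1 = a * t := le_antisymm (by linarith) h1
      have hua : t ∣ u.1 := hu1e ▸ Dvd.intro_left a rfl
      have ha1 : 1 ≤ a := by
        rcases Nat.eq_zero_or_pos a with h | h
        · exfalso; subst h; simp at hstay'
        · exact h
      obtain ⟨c, rfl⟩ : ∃ c, a = c + 1 := ⟨a - 1, by omega⟩
      have ec1 : (c + 1) * t = c * t + t := by ring
      have hcm : (c + 1) * t ≤ m := by linarith
      refine ⟨u, c, b, Or.inl hua, hxw.tail ⟨hw, Or.inl hua, c + 1, b, ha, hb, hp⟩,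
        hcm, hb, by linarith, by linarith, by linarith, by linarith,
        Relation.ReflTransGen.single ⟨e, by linarith, by linarith, h3, h4,
          by linarith, by linarith, by linarith, by linarith⟩⟩

end Stmt9Helper

theorem stmt_9 (m t : ℕ) (ht : 0 < t) (hdvd : t ∣ m)
    (E : ℕ × ℕ → ℕ × ℕ → Prop)
    (hE : ∀ u v : ℕ × ℕ, E u v → u.1 ≤ m ∧ u.2 ≤ m ∧ v.1 ≤ m ∧ v.2 ≤ m ∧
      ((u.1 = v.1 ∧ (u.2 + 1 = v.2 ∨ v.2 + 1 = u.2)) ∨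
        (u.2 = v.2 ∧ (u.1 + 1 = v.1 ∨ v.1 + 1 = u.1))))
    (x y : ℕ × ℕ)
    (hx : t ∣ x.1 ∨ t ∣ x.2) (hy : t ∣ y.1 ∨ t ∣ y.2) :
    Relation.ReflTransGen
      (fun u v => (t ∣ u.1 ∨ t ∣ u.2) ∧ (t ∣ v.1 ∨ t ∣ v.2) ∧
        ∃ a b : ℕ, (a + 1) * t ≤ m ∧ (b + 1) * t ≤ m ∧
          Relation.ReflTransGen
            (fun w z => E w z ∧
              a * t ≤ w.1 ∧ w.1 ≤ (a + 1) * t ∧ b * t ≤ w.2 ∧ w.2 ≤ (b + 1) * t ∧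
              a * t ≤ z.1 ∧ z.1 ≤ (a + 1) * t ∧ b * t ≤ z.2 ∧ z.2 ≤ (b + 1) * t)
            u v)
      x y ↔ Relation.ReflTransGen E x y := by
  show Relation.ReflTransGen (Stmt9Helper.ARel m t E) x y ↔ Relation.ReflTransGen E x y
  constructor
  · intro h
    clear hx hy
    induction h with
    | refl => exact Relation.ReflTransGen.refl
    | tail _ hab ih =>
      refine ih.trans ?_
      obtain ⟨_, _, a, b, _, _, hp⟩ := hab
      exact Relation.ReflTransGen.mono (fun w z hw => hw.1) _ _ hp
  · intro h
    have H : ∀ v, Relation.ReflTransGen E x v → x = v ∨ Stmt9Helper.Reach m t E x v := by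
      intro v hv
      induction hv with
      | refl => exact Or.inl rfl
      | @tail c d hp e ih =>
        right
        rcases ih with heq | hr
        · subst heq
          obtain ⟨h1, h2, h3, h4, hadj⟩ := hE _ _ e
          have hm : 0 < m := by rcases hadj with ⟨_, h5 | h5⟩ | ⟨_, h5 | h5⟩ <;> omega
          obtain ⟨a, ha1, ha2, ha3⟩ := Stmt9Helper.find_block ht hdvd hm h1
          obtain ⟨b, hb1, hb2, hb3⟩ := Stmt9Helper.find_block ht hdvd hm h2
          have hrx : Stmt9Helper.Reach m t E x x :=
            ⟨x, a, b, hx, Relation.ReflTransGen.refl, ha3, hb3, ha1, ha2, hb1, hb2,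
              Relation.ReflTransGen.refl⟩
          exact Stmt9Helper.reach_step ht hdvd hE e hrx
        · exact Stmt9Helper.reach_step ht hdvd hE e hr
    rcases H y h with heq | ⟨w, a, b, hw, hxw, ha, hb, _, _, _, _, hp⟩
    · subst heq; exact Relation.ReflTransGen.refl
    · exact hxw.tail ⟨hw, hy, a, b, ha, hb, hp⟩
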